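/- For any integers d ≥ 2 and ℓ ≥ 2, every S'_d-free graph that does not contain K_{ℓ,ℓ} as a subgraph has a vertex of degree at most (ℓ−1)·(ℓ^{d−1} + (d−1)·ℓ^d + ℓ^{2d−2}). -/

import Mathlib

/-- `G` contains `K_{ℓ,ℓ}` as a (not necessarily induced) subgraph. -/
def ContainsKll {V : Type*} (G : SimpleGraph V) (ℓ : ℕ) : Prop :=
  ∃ A B : Finset V, Disjoint A B ∧ A.card = ℓ ∧ B.card = ℓ ∧
    ∀ a ∈ A, ∀ b ∈ B, G.Adj a b

/-- `G` contains an induced copy of `H`. -/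
def HasInducedCopy {W V : Type*} (H : SimpleGraph W) (G : SimpleGraph V) : Prop :=
  ∃ f : W ↪ V, ∀ a b : W, G.Adj (f a) (f b) ↔ H.Adj a b

/-- `S'_d`, the 1-subdivision of the star `K_{1,d}`: `none` is the center,
`some (i, false)` is the subdivision vertex on the `i`-th edge, and
`some (i, true)` is the `i`-th leaf. -/
def subdividedStar (d : ℕ) : SimpleGraph (Option (Fin d × Bool)) :=
  SimpleGraph.fromRel (fun a b =>
    (∃ i, a = none ∧ b = some (i, false)) ∨
    (∃ i, a = some (i, false) ∧ b = some (i, true)))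

def reqF (ℓ : ℕ) : ℕ → ℕ
  | 0 => 1
  | m+1 => (ℓ-1) * reqF ℓ m + 1

def poolF (ℓ d : ℕ) : ℕ → ℕ
  | 0 => 2*d*(ℓ-1)+2
  | j+1 => (ℓ-1) * (poolF ℓ d j + (2*ℓ-1)) + 1

lemma reqF_one_le (ℓ m : ℕ) : 1 ≤ reqF ℓ m := by
  cases m with
  | zero => simp [reqF]
  | succ m => simp [reqF]

lemma reqF_lb (ℓ m : ℕ) : m*(ℓ-2)+1 ≤ reqF ℓ m := by
  rcases le_or_gt ℓ 2 with h | h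
  · have h0 : ℓ-2 = 0 := by omega
    simpa [h0] using reqF_one_le ℓ m
  · obtain ⟨e, rfl⟩ : ∃ e, ℓ = e+2 := ⟨ℓ-2, by omega⟩
    simp only [show e+2-2 = e from by omega]
    induction m with
    | zero => simp [reqF]
    | succ m ih =>
      have h1 := reqF_one_le (e+2) m
      show (m+1)*e+1 ≤ (e+2-1) * reqF (e+2) m + 1
      simp only [show e+2-1 = e+1 from by omega]
      nlinarith [ih, h1, Nat.mul_le_mul_left e h1]

lemma reqF_le_pow (ℓ : ℕ) (hℓ : 2 ≤ ℓ) (m : ℕ) : reqF ℓ m ≤ ℓ^m := by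
  induction m with
  | zero => simp [reqF]
  | succ m ih =>
    show (ℓ-1) * reqF ℓ m + 1 ≤ ℓ^(m+1)
    have h1 : 1 ≤ ℓ^m := Nat.one_le_pow _ _ (by omega)
    have h2 : (ℓ-1) * reqF ℓ m ≤ (ℓ-1) * ℓ^m := Nat.mul_le_mul_left _ ih
    have h3 : ℓ^(m+1) = (ℓ-1)*ℓ^m + ℓ^m := by
      obtain ⟨e, rfl⟩ : ∃ e, ℓ = e+2 := ⟨ℓ-2, by omega⟩
      simp only [show e+2-1 = e+1 from by omega, pow_succ]; ring
    omega

lemma bound1 (ℓ d : ℕ) (hℓ : 2 ≤ ℓ) (hd : 2 ≤ d) :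
    (ℓ-1) * (reqF ℓ (2*d-2) + 1) + ℓ ≤ (ℓ-1)*(ℓ^(d-1)+(d-1)*ℓ^d+ℓ^(2*d-2)) + 1 := by
  have h1 : reqF ℓ (2*d-2) ≤ ℓ^(2*d-2) := reqF_le_pow ℓ hℓ _
  have h2 : ℓ ≤ ℓ^(d-1) := by
    calc ℓ = ℓ^1 := (pow_one ℓ).symm
    _ ≤ ℓ^(d-1) := Nat.pow_le_pow_right (by omega) (by omega)
  obtain ⟨e, rfl⟩ : ∃ e, ℓ = e+2 := ⟨ℓ-2, by omega⟩
  simp only [show e+2-1 = e+1 from by omega] at *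
  have m1 : (e+1)*reqF (e+2) (2*d-2) ≤ (e+1)*(e+2)^(2*d-2) := Nat.mul_le_mul_left _ h1
  have m2 : (e+1)*(e+2) ≤ (e+1)*(e+2)^(d-1) := Nat.mul_le_mul_left _ h2
  nlinarith [m1, m2, Nat.zero_le ((e+1)*((d-1)*(e+2)^d))]

lemma poolF_two (d j : ℕ) : poolF 2 d j = 2*d+2+4*j := by
  induction j with
  | zero => simp [poolF]
  | succ j ih => show 1 * (poolF 2 d j + 3) + 1 = _; rw [ih]; ring

lemma pow_aux2 (f : ℕ) : 6*f+10 ≤ 2^(f+1)+(f+1)*2^(f+2)+4^(f+1)+1 := by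
  induction f with
  | zero => norm_num
  | succ f ih =>
    have h1 : (1:ℕ) ≤ 2^(f+1) := Nat.one_le_pow _ _ (by norm_num)
    have h2 : (1:ℕ) ≤ 4^(f+1) := Nat.one_le_pow _ _ (by norm_num)
    have h4 : (1:ℕ) ≤ 2^(f+2) := Nat.one_le_pow _ _ (by norm_num)
    have e1 : (2:ℕ)^(f+1+1) = 2*2^(f+1) := by rw [pow_succ]; ring
    have e2 : (2:ℕ)^(f+1+2) = 2*2^(f+2) := by rw [show f+1+2 = (f+2)+1 from by omega, pow_succ]; ring
    have e3 : (4:ℕ)^(f+1+1) = 4*4^(f+1) := by rw [pow_succ]; ring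
    rw [e1, e2, e3]
    nlinarith [ih, h1, h2, h4]

lemma bound2 (ℓ d : ℕ) (hℓ : 2 ≤ ℓ) (hd : 2 ≤ d) :
    poolF ℓ d (d-1) + (ℓ-2) ≤ (ℓ-1)*(ℓ^(d-1)+(d-1)*ℓ^d+ℓ^(2*d-2)) + 1 := by
  rcases eq_or_lt_of_le hℓ with h2 | h3
  · -- ℓ = 2
    subst h2
    rw [poolF_two]
    obtain ⟨f, rfl⟩ : ∃ f, d = f + 2 := ⟨d-2, by omega⟩
    have := pow_aux2 f
    have e1 : f+2-1 = f+1 := by omega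
    have e2 : 2*(f+2)-2 = 2*(f+1) := by omega
    have e3 : (2:ℕ)^(2*(f+1)) = 4^(f+1) := by
      rw [pow_mul]; norm_num
    simp only [e1, e2, e3]
    omega
  · -- ℓ ≥ 3
    have hl3 : 3 ≤ ℓ := h3
    have key : ∀ j, poolF ℓ d j + (2*ℓ+5) ≤ (2*d*(ℓ-1)+2*ℓ+7) * (ℓ-1)^j := by
      intro j
      induction j with
      | zero => simp only [poolF, pow_zero, mul_one]; omega
      | succ j ih =>
        show (ℓ-1) * (poolF ℓ d j + (2*ℓ-1)) + 1 + (2*ℓ+5) ≤ _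
        have h1 : (ℓ-1) * (poolF ℓ d j + (2*ℓ+5)) ≤ (ℓ-1) * ((2*d*(ℓ-1)+2*ℓ+7) * (ℓ-1)^j) :=
          Nat.mul_le_mul_left _ ih
        have h2 : (2*d*(ℓ-1)+2*ℓ+7) * (ℓ-1)^(j+1) = (ℓ-1) * ((2*d*(ℓ-1)+2*ℓ+7) * (ℓ-1)^j) := by
          rw [pow_succ]; ring
        rw [h2]
        obtain ⟨e, rfl⟩ : ∃ e, ℓ = e + 3 := ⟨ℓ-3, by omega⟩
        simp only [show e+3-1 = e+2 from by omega, show 2*(e+3)-1 = 2*e+5 from by omega,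
          show 2*(e+3)+5 = 2*e+11 from by omega] at *
        nlinarith [h1]
    rcases eq_or_lt_of_le hd with hd2 | hd3
    · -- d = 2
      subst hd2
      have hk := key 1
      obtain ⟨e, rfl⟩ : ∃ e, ℓ = e + 3 := ⟨ℓ-3, by omega⟩
      simp only [show e+3-1 = e+2 from by omega, show e+3-2 = e+1 from by omega,
        show 2*2-2 = 2 by omega, show (2:ℕ)-1 = 1 by omega, pow_one, pow_two] at *
      nlinarith [hk]
    · -- d ≥ 3
      have hd3' : 3 ≤ d := hd3
      have ha : 2*d*(ℓ-1)^(d-1) ≤ (d-1)*ℓ^d := by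
        have h1 : (ℓ-1)^(d-1) ≤ ℓ^(d-1) := Nat.pow_le_pow_left (by omega) _
        have h2 : 2*d ≤ (d-1)*ℓ := by
          have : (d-1)*3 ≤ (d-1)*ℓ := Nat.mul_le_mul_left _ hl3
          omega
        calc 2*d*(ℓ-1)^(d-1) ≤ 2*d*ℓ^(d-1) := Nat.mul_le_mul_left _ h1
        _ ≤ ((d-1)*ℓ)*ℓ^(d-1) := Nat.mul_le_mul_right _ h2
        _ = (d-1)*ℓ^d := by rw [mul_assoc, ← pow_succ']; congr 2; omega
      have hb : (2*ℓ+7)*(ℓ-1)^(d-2) ≤ ℓ^(2*d-2) := by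
        have h1 : (ℓ-1)^(d-2) ≤ ℓ^(d-2) := Nat.pow_le_pow_left (by omega) _
        have h2 : 2*ℓ+7 ≤ ℓ^d := by
          have hp : ℓ^3 ≤ ℓ^d := Nat.pow_le_pow_right (by omega) hd3'
          have c1 : 9*ℓ ≤ ℓ^3 := by
            have : 3*(3*ℓ) ≤ ℓ*(ℓ*ℓ) := by
              apply Nat.mul_le_mul hl3
              exact Nat.mul_le_mul_right _ hl3
            calc 9*ℓ = 3*(3*ℓ) := by ring
            _ ≤ ℓ*(ℓ*ℓ) := this
            _ = ℓ^3 := by ring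
          omega
        calc (2*ℓ+7)*(ℓ-1)^(d-2) ≤ ℓ^d * ℓ^(d-2) := Nat.mul_le_mul h2 h1
        _ = ℓ^(2*d-2) := by rw [← pow_add]; congr 1; omega
      have hc : (2*d*(ℓ-1)+2*ℓ+7) * (ℓ-1)^(d-1) ≤ (ℓ-1)*((d-1)*ℓ^d + ℓ^(2*d-2)) := by
        have e1 : (2*d*(ℓ-1)+2*ℓ+7) * (ℓ-1)^(d-1) =
            (ℓ-1) * (2*d*(ℓ-1)^(d-1) + (2*ℓ+7)*(ℓ-1)^(d-2)) := by
          have e2 : (ℓ-1)^(d-1) = (ℓ-1)*(ℓ-1)^(d-2) := by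
            rw [← pow_succ']; congr 1; omega
          calc (2*d*(ℓ-1)+2*ℓ+7) * (ℓ-1)^(d-1)
              = 2*d*(ℓ-1)*(ℓ-1)^(d-1) + (2*ℓ+7)*(ℓ-1)^(d-1) := by ring
          _ = (ℓ-1) * (2*d*(ℓ-1)^(d-1) + (2*ℓ+7)*(ℓ-1)^(d-2)) := by rw [e2]; ring
        rw [e1]
        exact Nat.mul_le_mul_left _ (by omega)
      have hkey := key (d-1)
      have hfin : (ℓ-1)*((d-1)*ℓ^d + ℓ^(2*d-2)) ≤ (ℓ-1)*(ℓ^(d-1)+(d-1)*ℓ^d+ℓ^(2*d-2)) := by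
        apply Nat.mul_le_mul_left; omega
      omega

lemma poolF_zero_le (ℓ d : ℕ) (hℓ : 2 ≤ ℓ) (j : ℕ) : poolF ℓ d 0 ≤ poolF ℓ d j := by
  induction j with
  | zero => exact le_refl _
  | succ j ih =>
    have h1 : poolF ℓ d j ≤ (ℓ-1)*(poolF ℓ d j + (2*ℓ-1)) :=
      le_trans (Nat.le_add_right _ _) (Nat.le_mul_of_pos_left _ (by omega))
    show _ ≤ (ℓ-1) * (poolF ℓ d j + (2*ℓ-1)) + 1
    omega

section HL
variable {V : Type*} [Fintype V] [DecidableEq V] (G : SimpleGraph V) [DecidableRel G.Adj]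

/-- Key counting lemma: if `Z` is a set of common neighbors of `xstar`, then few vertices
of `U` can see all but fewer than `r` elements of `Z`. -/
lemma HL (ℓ : ℕ) (hℓ : 2 ≤ ℓ) (hK : ¬ContainsKll G ℓ) (xstar : V) (Z U : Finset V) (r : ℕ)
    (hr : 1 ≤ r) (hanch : ∀ b ∈ Z, G.Adj xstar b) (hxU : xstar ∉ U)
    (hcard : (ℓ-1) * r + 1 ≤ Z.card) :
    (U.filter fun v => (Z \ G.neighborFinset v).card < r).card ≤ ℓ - 2 := by
  by_contra hcon
  push_neg at hcon
  obtain ⟨A', hA'U, hA'card⟩ :=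
    Finset.exists_subset_card_eq (s := U.filter fun v => (Z \ G.neighborFinset v).card < r)
      (n := ℓ-1) (by omega)
  classical
  set B := Z.filter (fun b => ∀ a ∈ A', G.Adj a b) with hB
  have hsub : Z \ B ⊆ A'.biUnion (fun a => Z \ G.neighborFinset a) := by
    intro b hb
    rw [Finset.mem_sdiff, hB, Finset.mem_filter] at hb
    obtain ⟨hbZ, hnb⟩ := hb
    rw [not_and] at hnb
    have := hnb hbZ
    push_neg at this
    obtain ⟨a, haA', hna⟩ := this
    rw [Finset.mem_biUnion]
    refine ⟨a, haA', ?_⟩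
    rw [Finset.mem_sdiff, SimpleGraph.mem_neighborFinset]
    exact ⟨hbZ, hna⟩
  have hcount : (Z \ B).card ≤ (ℓ-1) * (r-1) := by
    calc (Z \ B).card ≤ (A'.biUnion (fun a => Z \ G.neighborFinset a)).card :=
      Finset.card_le_card hsub
    _ ≤ ∑ a ∈ A', (Z \ G.neighborFinset a).card := Finset.card_biUnion_le
    _ ≤ ∑ _a ∈ A', (r-1) := by
        apply Finset.sum_le_sum
        intro a ha
        have := (Finset.mem_filter.mp (hA'U ha)).2
        omega
    _ = (ℓ-1)*(r-1) := by rw [Finset.sum_const, hA'card, smul_eq_mul]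
  have hBZ : B ⊆ Z := Finset.filter_subset _ _
  have hBcard : ℓ ≤ B.card := by
    have h1 : (Z\B).card = Z.card - B.card := Finset.card_sdiff_of_subset hBZ
    have h2 : B.card ≤ Z.card := Finset.card_le_card hBZ
    have h3 : (ℓ-1)*r = (ℓ-1)*(r-1)+(ℓ-1) := by
      obtain ⟨s, rfl⟩ : ∃ s, r = s+1 := ⟨r-1, by omega⟩
      rw [Nat.mul_succ]; simp
    omega
  obtain ⟨B', hB'B, hB'card⟩ := Finset.exists_subset_card_eq hBcard
  apply hK
  have hxA' : xstar ∉ A' := fun h => hxU (Finset.mem_of_mem_filter _ (hA'U h))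
  have hmemB : ∀ b ∈ B', b ∈ Z ∧ ∀ a ∈ A', G.Adj a b := by
    intro b hb
    have := hB'B hb
    rw [hB, Finset.mem_filter] at this
    exact this
  refine ⟨insert xstar A', B', ?_, ?_, hB'card, ?_⟩
  · rw [Finset.disjoint_left]
    intro a haA haB
    obtain ⟨hbZ, hadj⟩ := hmemB a haB
    rcases Finset.mem_insert.mp haA with rfl | haA'
    · exact G.loopless.irrefl a (hanch a hbZ)
    · exact G.loopless.irrefl a (hadj a haA')
  · rw [Finset.card_insert_of_notMem hxA', hA'card]; omega
  · intro a haA b hbB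
    obtain ⟨hbZ, hadj⟩ := hmemB b hbB
    rcases Finset.mem_insert.mp haA with rfl | haA'
    · exact hanch b hbZ
    · exact hadj a haA'

/-- Outside neighborhood. -/
def OutS (G : SimpleGraph V) [DecidableRel G.Adj] (u p : V) : Finset V :=
  G.neighborFinset p \ insert u (G.neighborFinset u)

lemma mem_OutS {G : SimpleGraph V} [DecidableRel G.Adj] {u p v : V} :
    v ∈ OutS G u p ↔ G.Adj p v ∧ v ≠ u ∧ ¬ G.Adj u v := by
  simp [OutS, SimpleGraph.mem_neighborFinset]

lemma OutS_not_nbr_u {G : SimpleGraph V} [DecidableRel G.Adj] {u p v : V}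
    (h : v ∈ OutS G u p) : v ∉ G.neighborFinset u := by
  rw [mem_OutS] at h
  rw [SimpleGraph.mem_neighborFinset]
  exact h.2.2

lemma OutS_card_lb {G : SimpleGraph V} [DecidableRel G.Adj] {u p : V}
    (hp : p ∈ G.neighborFinset u) (hdegp : G.degree u ≤ G.degree p) :
    (G.neighborFinset u \ G.neighborFinset p).card ≤ (OutS G u p).card + 1 := by
  have h1 : (G.neighborFinset p ∩ insert u (G.neighborFinset u)).card +
      (G.neighborFinset p \ insert u (G.neighborFinset u)).card = G.degree p := by
    rw [Finset.card_inter_add_card_sdiff, SimpleGraph.card_neighborFinset_eq_degree]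
  have h2 : G.neighborFinset p ∩ insert u (G.neighborFinset u) ⊆
      insert u (G.neighborFinset p ∩ G.neighborFinset u) := by
    intro v hv
    rw [Finset.mem_inter, Finset.mem_insert] at hv
    rw [Finset.mem_insert, Finset.mem_inter]
    tauto
  have h3 : (G.neighborFinset p ∩ insert u (G.neighborFinset u)).card ≤
      1 + (G.neighborFinset p ∩ G.neighborFinset u).card := by
    calc _ ≤ (insert u (G.neighborFinset p ∩ G.neighborFinset u)).card :=
      Finset.card_le_card h2
    _ ≤ 1 + _ := by rw [add_comm]; exact Finset.card_insert_le _ _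
  have h4 : (G.neighborFinset u ∩ G.neighborFinset p).card +
      (G.neighborFinset u \ G.neighborFinset p).card = G.degree u := by
    rw [Finset.card_inter_add_card_sdiff, SimpleGraph.card_neighborFinset_eq_degree]
  have h5 : G.neighborFinset u ∩ G.neighborFinset p =
      G.neighborFinset p ∩ G.neighborFinset u := Finset.inter_comm _ _
  rw [h5] at h4
  unfold OutS
  omega

end HL

section Phase1
variable {V : Type*} [Fintype V] [DecidableEq V]

set_option maxHeartbeats 2000000 in
lemma phase1 (G : SimpleGraph V) [DecidableRel G.Adj]
    (d ℓ : ℕ) (hd : 2 ≤ d) (hℓ : 2 ≤ ℓ)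
    (hK : ¬ContainsKll G ℓ) (u : V)
    (hmin : ∀ v, G.degree u ≤ G.degree v)
    (hn : (ℓ-1)*(ℓ^(d-1)+(d-1)*ℓ^d+ℓ^(2*d-2)) + 1 ≤ G.degree u) :
    ∀ k, k ≤ d → ∃ (x : ℕ → V) (P : Finset V),
      (∀ i, i < k → x i ∈ G.neighborFinset u) ∧
      (∀ i j, i < k → j < k → i ≠ j → ¬ G.Adj (x i) (x j)) ∧
      (∀ i j, i < k → j < k → i ≠ j → x i ≠ x j) ∧
      (∀ i, i < k → reqF ℓ (2*d-1-k) ≤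
        ((OutS G u (x i)) \ ((Finset.range k).erase i).biUnion
          (fun j => G.neighborFinset (x j))).card) ∧
      (P ⊆ G.neighborFinset u) ∧
      (∀ p ∈ P, ∀ i, i < k → ¬ G.Adj (x i) p ∧ p ≠ x i) ∧
      (∀ p ∈ P, reqF ℓ (2*d-2-k) ≤
        ((OutS G u p) \ (Finset.range k).biUnion (fun j => G.neighborFinset (x j))).card) ∧
      (k < d → poolF ℓ d (d-1-k) ≤ P.card) := by
  intro k
  induction k with
  | zero =>
    intro _
    refine ⟨fun _ => u, (G.neighborFinset u).filter
        (fun p => ¬ (((G.neighborFinset u) \ G.neighborFinset p).card < reqF ℓ (2*d-2) + 1)),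
      fun i hi => absurd hi (by omega), fun i j hi => absurd hi (by omega),
      fun i j hi => absurd hi (by omega), fun i hi => absurd hi (by omega),
      Finset.filter_subset _ _, fun p hp i hi => absurd hi (by omega), ?_, ?_⟩
    · intro p hp
      rw [Finset.mem_filter] at hp
      obtain ⟨hpN, hsh⟩ := hp
      have hout := OutS_card_lb hpN (hmin p)
      simp only [Nat.sub_zero, Finset.range_zero, Finset.biUnion_empty, Finset.sdiff_empty]
      omega
    · intro _
      have hb1 := bound1 ℓ d hℓ hd
      have hcard : (ℓ-1) * (reqF ℓ (2*d-2) + 1) + 1 ≤ (G.neighborFinset u).card := by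
        rw [SimpleGraph.card_neighborFinset_eq_degree]
        omega
      have hsh := HL G ℓ hℓ hK u (G.neighborFinset u) (G.neighborFinset u)
        (reqF ℓ (2*d-2)+1) (by omega)
        (fun b hb => by rwa [SimpleGraph.mem_neighborFinset] at hb)
        (by rw [SimpleGraph.mem_neighborFinset]; exact G.loopless.irrefl u)
        hcard
      have hsplit := Finset.card_filter_add_card_filter_not
        (s := G.neighborFinset u)
        (p := fun p => ((G.neighborFinset u) \ G.neighborFinset p).card < reqF ℓ (2*d-2) + 1)
      have hb2 := bound2 ℓ d hℓ hd
      have hdeg : (ℓ-1)*(ℓ^(d-1)+(d-1)*ℓ^d+ℓ^(2*d-2)) + 1 ≤ (G.neighborFinset u).card := by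
        rw [SimpleGraph.card_neighborFinset_eq_degree]; exact hn
      simp only [Nat.sub_zero]
      omega
  | succ k ih =>
    intro hk1d
    have hkd : k < d := by omega
    obtain ⟨x, P, I1, I2, I3, I4, I5, I6, I7, I8⟩ := ih (by omega)
    have hPcard := I8 hkd
    have idW : reqF ℓ (2*d-1-k) = (ℓ-1) * reqF ℓ (2*d-2-k) + 1 := by
      rw [show 2*d-1-k = (2*d-2-k)+1 from by omega]; rfl
    have idM : reqF ℓ (2*d-2-k) = (ℓ-1) * reqF ℓ (2*d-3-k) + 1 := by
      rw [show 2*d-2-k = (2*d-3-k)+1 from by omega]; rfl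
    set rW := reqF ℓ (2*d-2-k) with hrW
    set rM := reqF ℓ (2*d-3-k) with hrM
    set MW : V → Finset V := fun p =>
      (OutS G u p) \ (Finset.range k).biUnion (fun j => G.neighborFinset (x j)) with hMW
    set BWi : ℕ → Finset V := fun i =>
      (OutS G u (x i)) \ ((Finset.range k).erase i).biUnion
        (fun j => G.neighborFinset (x j)) with hBWi
    have hanchBW : ∀ j, j < k → ∀ b ∈ BWi j, G.Adj (x j) b := by
      intro j hj b hb
      simp only [hBWi] at hb
      have h1 := (Finset.mem_sdiff.mp hb).1
      have h2 := (Finset.mem_sdiff.mp h1).1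
      rwa [SimpleGraph.mem_neighborFinset] at h2
    have hanchMW : ∀ p, ∀ b ∈ MW p, G.Adj p b := by
      intro p b hb
      simp only [hMW] at hb
      have h1 := (Finset.mem_sdiff.mp hb).1
      have h2 := (Finset.mem_sdiff.mp h1).1
      rwa [SimpleGraph.mem_neighborFinset] at h2
    have hxnotP : ∀ j, j < k → x j ∉ P := by
      intro j hj hmem
      exact (I6 (x j) hmem j hj).2 rfl
    have hunotP : u ∉ P := by
      intro hmem
      have := I5 hmem
      rw [SimpleGraph.mem_neighborFinset] at this
      exact G.loopless.irrefl u this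
    set Vb := (Finset.range k).biUnion
      (fun j => P.filter (fun v => ((BWi j) \ G.neighborFinset v).card < rW)) with hVbdef
    have hVbj : ∀ j, j < k →
        (P.filter (fun v => ((BWi j) \ G.neighborFinset v).card < rW)).card ≤ ℓ-2 := by
      intro j hj
      apply HL G ℓ hℓ hK (x j) (BWi j) P rW (reqF_one_le ℓ _) (hanchBW j hj) (hxnotP j hj)
      rw [← idW]
      exact I4 j hj
    have hVb : Vb.card ≤ k * (ℓ-2) := by
      calc Vb.card ≤ ∑ j ∈ Finset.range k,
          (P.filter (fun v => ((BWi j) \ G.neighborFinset v).card < rW)).card :=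
        Finset.card_biUnion_le
      _ ≤ ∑ _j ∈ Finset.range k, (ℓ-2) :=
        Finset.sum_le_sum (fun j hj => hVbj j (Finset.mem_range.mp hj))
      _ = k * (ℓ-2) := by rw [Finset.sum_const, Finset.card_range, smul_eq_mul]
    have BUILD : ∀ x' ∈ P, (∀ j, j < k → rW ≤ ((BWi j) \ G.neighborFinset x').card) →
        ∀ PN : Finset V, PN ⊆ (P \ G.neighborFinset x').erase x' →
        (∀ p ∈ PN, rM ≤ ((MW p) \ G.neighborFinset x').card) →
        ((k+1) < d → poolF ℓ d (d-1-(k+1)) ≤ PN.card) →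
        ∃ (x : ℕ → V) (P : Finset V),
          (∀ i, i < k+1 → x i ∈ G.neighborFinset u) ∧
          (∀ i j, i < k+1 → j < k+1 → i ≠ j → ¬ G.Adj (x i) (x j)) ∧
          (∀ i j, i < k+1 → j < k+1 → i ≠ j → x i ≠ x j) ∧
          (∀ i, i < k+1 → reqF ℓ (2*d-1-(k+1)) ≤
            ((OutS G u (x i)) \ ((Finset.range (k+1)).erase i).biUnion
              (fun j => G.neighborFinset (x j))).card) ∧
          (P ⊆ G.neighborFinset u) ∧
          (∀ p ∈ P, ∀ i, i < k+1 → ¬ G.Adj (x i) p ∧ p ≠ x i) ∧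
          (∀ p ∈ P, reqF ℓ (2*d-2-(k+1)) ≤
            ((OutS G u p) \ (Finset.range (k+1)).biUnion
              (fun j => G.neighborFinset (x j))).card) ∧
          (k+1 < d → poolF ℓ d (d-1-(k+1)) ≤ P.card) := by
      intro x' hx'P hlight PN hPNsub hPNlight hPNcard
      set xN := Function.update x k x' with hxN
      have hupd : ∀ i, i < k → xN i = x i := by
        intro i hi
        rw [hxN]
        exact Function.update_of_ne (by omega) _ _
      have hupdk : xN k = x' := by rw [hxN]; exact Function.update_self _ _ _
      have hPNP : PN ⊆ P := by
        intro p hp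
        have h1 := hPNsub hp
        exact (Finset.mem_sdiff.mp (Finset.mem_of_mem_erase h1)).1
      have hBWnew : ∀ i, i < k →
          (OutS G u (xN i)) \ ((Finset.range (k+1)).erase i).biUnion
            (fun j => G.neighborFinset (xN j)) = (BWi i) \ G.neighborFinset x' := by
        intro i hi
        rw [hupd i hi]
        have hrange : (Finset.range (k+1)).erase i = insert k ((Finset.range k).erase i) := by
          ext a
          simp only [Finset.mem_erase, Finset.mem_insert, Finset.mem_range]
          omega
        rw [hrange, Finset.biUnion_insert, hupdk]
        have hcong : ((Finset.range k).erase i).biUnion (fun j => G.neighborFinset (xN j)) =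
            ((Finset.range k).erase i).biUnion (fun j => G.neighborFinset (x j)) := by
          apply Finset.biUnion_congr rfl
          intro j hj
          rw [hupd j (Finset.mem_range.mp (Finset.mem_of_mem_erase hj))]
        rw [hcong]
        simp only [hBWi]
        ext a
        simp only [Finset.mem_sdiff, Finset.mem_union]
        tauto
      have hMWnew : ∀ p,
          (OutS G u p) \ (Finset.range (k+1)).biUnion (fun j => G.neighborFinset (xN j)) =
            (MW p) \ G.neighborFinset x' := by
        intro p
        rw [Finset.range_add_one, Finset.biUnion_insert, hupdk]
        have hcong : (Finset.range k).biUnion (fun j => G.neighborFinset (xN j)) =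
            (Finset.range k).biUnion (fun j => G.neighborFinset (x j)) := by
          apply Finset.biUnion_congr rfl
          intro j hj
          rw [hupd j (Finset.mem_range.mp hj)]
        rw [hcong]
        simp only [hMW]
        ext a
        simp only [Finset.mem_sdiff, Finset.mem_union]
        tauto
      refine ⟨xN, PN, ?_, ?_, ?_, ?_, fun p hp => I5 (hPNP hp), ?_, ?_, hPNcard⟩
      · intro i hi
        rcases Nat.lt_or_ge i k with h | h
        · rw [hupd i h]; exact I1 i h
        · have hik : i = k := by omega
          rw [hik, hupdk]; exact I5 hx'P
      · intro i j hi hj hij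
        rcases Nat.lt_or_ge i k with h | h <;> rcases Nat.lt_or_ge j k with h' | h'
        · rw [hupd i h, hupd j h']; exact I2 i j h h' hij
        · have hjk : j = k := by omega
          rw [hjk, hupd i h, hupdk]
          exact (I6 x' hx'P i h).1
        · have hik : i = k := by omega
          rw [hik, hupd j h', hupdk]
          intro hadj
          exact (I6 x' hx'P j h').1 (G.adj_symm hadj)
        · omega
      · intro i j hi hj hij
        rcases Nat.lt_or_ge i k with h | h <;> rcases Nat.lt_or_ge j k with h' | h'
        · rw [hupd i h, hupd j h']; exact I3 i j h h' hij
        · have hjk : j = k := by omega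
          rw [hjk, hupd i h, hupdk]
          exact Ne.symm (I6 x' hx'P i h).2
        · have hik : i = k := by omega
          rw [hik, hupd j h', hupdk]
          exact (I6 x' hx'P j h').2
        · omega
      · intro i hi
        rw [show 2*d-1-(k+1) = 2*d-2-k from by omega, ← hrW]
        rcases Nat.lt_or_ge i k with h | h
        · rw [hBWnew i h]
          exact hlight i h
        · have hik : i = k := by omega
          rw [hik, hupdk]
          have hrange : (Finset.range (k+1)).erase k = Finset.range k := by
            rw [Finset.range_add_one, Finset.erase_insert Finset.notMem_range_self]
          rw [hrange]
          have hcong : (Finset.range k).biUnion (fun j => G.neighborFinset (xN j)) =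
              (Finset.range k).biUnion (fun j => G.neighborFinset (x j)) := by
            apply Finset.biUnion_congr rfl
            intro j hj
            rw [hupd j (Finset.mem_range.mp hj)]
          rw [hcong]
          exact I7 x' hx'P
      · intro p hp i hi
        rcases Nat.lt_or_ge i k with h | h
        · rw [hupd i h]; exact I6 p (hPNP hp) i h
        · have hik : i = k := by omega
          rw [hik, hupdk]
          have h1 := hPNsub hp
          have h2 := Finset.mem_of_mem_erase h1
          have h3 := Finset.ne_of_mem_erase h1
          rw [Finset.mem_sdiff] at h2
          refine ⟨?_, h3⟩
          intro hadj
          apply h2.2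
          rwa [SimpleGraph.mem_neighborFinset]
      · intro p hp
        rw [show 2*d-2-(k+1) = 2*d-3-k from by omega, ← hrM, hMWnew p]
        exact hPNlight p hp
    rcases Nat.lt_or_ge (k+1) d with hk1 | hk1
    · -- full case
      have hdk2 : d-1-k = (d-2-k)+1 := by omega
      set rA := poolF ℓ d (d-2-k) + (2*ℓ-1) with hrA
      have idA : poolF ℓ d (d-1-k) = (ℓ-1) * rA + 1 := by
        rw [hdk2]; rfl
      set Va := P.filter (fun v => (P \ G.neighborFinset v).card < rA) with hVadef
      have hVa : Va.card ≤ ℓ-2 := by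
        apply HL G ℓ hℓ hK u P P rA (by rw [hrA]; omega)
          (fun b hb => by have := I5 hb; rwa [SimpleGraph.mem_neighborFinset] at this) hunotP
        rw [← idA]
        exact hPcard
      set outdeg : V → ℕ := fun v =>
        (P.filter (fun p => ((MW p) \ G.neighborFinset v).card < rM)).card with houtdeg
      set Vc := P.filter (fun v => 2*(ℓ-1)+1 ≤ outdeg v) with hVcdef
      have hrow : ∀ p ∈ P,
          (P.filter (fun v => ((MW p) \ G.neighborFinset v).card < rM)).card ≤ ℓ-1 := by
        intro p hp
        have h1 := HL G ℓ hℓ hK p (MW p) (P.erase p) rM (reqF_one_le ℓ _)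
          (hanchMW p) (Finset.notMem_erase p P) (by rw [← idM]; exact I7 p hp)
        have h2 : P.filter (fun v => ((MW p) \ G.neighborFinset v).card < rM) ⊆
            insert p ((P.erase p).filter
              (fun v => ((MW p) \ G.neighborFinset v).card < rM)) := by
          intro v hv
          rw [Finset.mem_filter] at hv
          rcases eq_or_ne v p with rfl | hne
          · exact Finset.mem_insert_self _ _
          · apply Finset.mem_insert_of_mem
            rw [Finset.mem_filter]
            exact ⟨Finset.mem_erase.mpr ⟨hne, hv.1⟩, hv.2⟩
        calc _ ≤ (insert p ((P.erase p).filter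
            (fun v => ((MW p) \ G.neighborFinset v).card < rM))).card :=
          Finset.card_le_card h2
        _ ≤ ((P.erase p).filter
            (fun v => ((MW p) \ G.neighborFinset v).card < rM)).card + 1 :=
          Finset.card_insert_le _ _
        _ ≤ ℓ-1 := by omega
      have hVc : Vc.card * (2*(ℓ-1)+1) ≤ (ℓ-1) * P.card := by
        have hswap : ∑ v ∈ P, outdeg v =
            ∑ p ∈ P, (P.filter (fun v => ((MW p) \ G.neighborFinset v).card < rM)).card := by
          simp only [houtdeg, Finset.card_filter]
          exact Finset.sum_comm
        have h3 : ∑ p ∈ P, (P.filter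
            (fun v => ((MW p) \ G.neighborFinset v).card < rM)).card ≤ (ℓ-1) * P.card := by
          calc _ ≤ ∑ _p ∈ P, (ℓ-1) := Finset.sum_le_sum hrow
          _ = P.card * (ℓ-1) := by rw [Finset.sum_const, smul_eq_mul]
          _ = (ℓ-1) * P.card := Nat.mul_comm _ _
        have h4 : Vc.card * (2*(ℓ-1)+1) ≤ ∑ v ∈ Vc, outdeg v := by
          have h5 := Finset.card_nsmul_le_sum Vc outdeg (2*(ℓ-1)+1)
            (fun v hv => (Finset.mem_filter.mp hv).2)
          rw [smul_eq_mul] at h5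
          exact h5
        have h5 : ∑ v ∈ Vc, outdeg v ≤ ∑ v ∈ P, outdeg v :=
          Finset.sum_le_sum_of_subset (Finset.filter_subset _ _)
        omega
      have hPbig : poolF ℓ d 0 ≤ P.card := le_trans (poolF_zero_le ℓ d hℓ _) hPcard
      have hnonempty : (P \ (Va ∪ Vb ∪ Vc)).Nonempty := by
        rw [← Finset.card_pos]
        have hsub1 : P.card ≤ (P \ (Va ∪ Vb ∪ Vc)).card + (Va ∪ Vb ∪ Vc).card :=
          Finset.card_le_card_sdiff_add_card
        have hsub2 : (Va ∪ Vb ∪ Vc).card ≤ Va.card + Vb.card + Vc.card := by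
          calc (Va ∪ Vb ∪ Vc).card ≤ (Va ∪ Vb).card + Vc.card := Finset.card_union_le _ _
          _ ≤ Va.card + Vb.card + Vc.card := by
              have := Finset.card_union_le Va Vb; omega
        have hP0 : 2*d*(ℓ-1)+2 ≤ P.card := hPbig
        obtain ⟨e, rfl⟩ : ∃ e, ℓ = e+2 := ⟨ℓ-2, by omega⟩
        simp only [show e+2-1 = e+1 from by omega, show e+2-2 = e from by omega] at hVa hVb hVc hP0
        by_contra hcon
        push_neg at hcon
        have hcon' : (P \ (Va ∪ Vb ∪ Vc)).card = 0 := by omega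
        have hcc : P.card ≤ (k+1)*e + Vc.card := by
          have : (k+1)*e = k*e+e := by ring
          omega
        have h6 : (2*e+3) * P.card ≤ (2*e+3)*((k+1)*e) + (2*e+3)*Vc.card := by
          have h6' := Nat.mul_le_mul_left (2*e+3) hcc
          rw [Nat.mul_add] at h6'
          exact h6'
        have h7 : (2*e+3)*Vc.card ≤ (e+1)*P.card := by
          have h7' := hVc
          rw [show 2*(e+1)+1 = 2*e+3 from by omega] at h7'
          rw [Nat.mul_comm] at h7'
          exact h7'
        have h8 : (k+1)*e ≤ d*e := Nat.mul_le_mul_right _ (by omega)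
        have h9 : (2*e+3)*((k+1)*e) ≤ (2*e+3)*(d*e) := Nat.mul_le_mul_left _ h8
        have h10 : (2*e+3)*P.card ≤ (2*e+3)*(d*e) + (e+1)*P.card := by omega
        have h11 : (e+2)*P.card + (e+1)*P.card = (2*e+3)*P.card := by ring
        have h12 : (e+2)*P.card ≤ (2*e+3)*(d*e) := by omega
        have h13 : (e+2)*(2*d*(e+1)+2) ≤ (e+2)*P.card := Nat.mul_le_mul_left _ hP0
        have h14 : (2*e+3)*(d*e) + (3*(d*e) + 4*d + 2*e + 4) = (e+2)*(2*d*(e+1)+2) := by ring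
        omega
      obtain ⟨x', hx'⟩ := hnonempty
      rw [Finset.mem_sdiff] at hx'
      obtain ⟨hx'P, hx'not⟩ := hx'
      have hx'a : x' ∉ Va := fun h => hx'not
        (Finset.mem_union_left _ (Finset.mem_union_left _ h))
      have hx'vb : x' ∉ Vb := fun h => hx'not
        (Finset.mem_union_left _ (Finset.mem_union_right _ h))
      have hx'c : x' ∉ Vc := fun h => hx'not (Finset.mem_union_right _ h)
      have hlight : ∀ j, j < k → rW ≤ ((BWi j) \ G.neighborFinset x').card := by
        intro j hj
        by_contra hcon
        push_neg at hcon
        apply hx'vb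
        rw [hVbdef]
        exact Finset.mem_biUnion.mpr ⟨j, Finset.mem_range.mpr hj,
          Finset.mem_filter.mpr ⟨hx'P, hcon⟩⟩
      have hx'a' : rA ≤ (P \ G.neighborFinset x').card := by
        by_contra hcon
        push_neg at hcon
        exact hx'a (Finset.mem_filter.mpr ⟨hx'P, hcon⟩)
      have hx'c' : outdeg x' ≤ 2*(ℓ-1) := by
        by_contra hcon
        push_neg at hcon
        exact hx'c (Finset.mem_filter.mpr ⟨hx'P, by omega⟩)
      set PBase := (P \ G.neighborFinset x').erase x' with hPBase
      set PN := PBase.filter (fun p => rM ≤ ((MW p) \ G.neighborFinset x').card) with hPN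
      have hPNsub : PN ⊆ PBase := Finset.filter_subset _ _
      have hPNlight : ∀ p ∈ PN, rM ≤ ((MW p) \ G.neighborFinset x').card :=
        fun p hp => (Finset.mem_filter.mp hp).2
      have hPNcard : (k+1) < d → poolF ℓ d (d-1-(k+1)) ≤ PN.card := by
        intro _
        have hx'mem : x' ∈ P \ G.neighborFinset x' := by
          rw [Finset.mem_sdiff]
          refine ⟨hx'P, ?_⟩
          rw [SimpleGraph.mem_neighborFinset]
          exact G.loopless.irrefl x'
        have hb1 : (P \ G.neighborFinset x').card - 1 ≤ PBase.card := by
          rw [hPBase, Finset.card_erase_of_mem hx'mem]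
        have hdest : (PBase.filter
            (fun p => ¬ (rM ≤ ((MW p) \ G.neighborFinset x').card))).card ≤ 2*(ℓ-1) := by
          have hss : PBase.filter
              (fun p => ¬ (rM ≤ ((MW p) \ G.neighborFinset x').card)) ⊆
              P.filter (fun p => ((MW p) \ G.neighborFinset x').card < rM) := by
            intro p hp
            rw [Finset.mem_filter] at hp ⊢
            refine ⟨(Finset.mem_sdiff.mp (Finset.mem_of_mem_erase hp.1)).1, by omega⟩
          exact le_trans (Finset.card_le_card hss) hx'c'
        have hsplit := Finset.card_filter_add_card_filter_not
          (s := PBase) (p := fun p => rM ≤ ((MW p) \ G.neighborFinset x').card)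
        rw [show d-1-(k+1) = d-2-k from by omega]
        have hrAval : rA = poolF ℓ d (d-2-k) + (2*ℓ-1) := hrA
        rw [← hPN] at hsplit
        omega
      exact BUILD x' hx'P hlight PN hPNsub hPNlight hPNcard
    · -- last case : k+1 = d
      have hVblt : Vb.card < P.card := by
        have h1 : poolF ℓ d (d-1-k) ≤ P.card := hPcard
        rw [show d-1-k = 0 from by omega] at h1
        have h2 : poolF ℓ d 0 = 2*d*(ℓ-1)+2 := rfl
        have h3 : k*(ℓ-2) ≤ d*(ℓ-1) := Nat.mul_le_mul (by omega) (by omega)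
        have h4 : 2*d*(ℓ-1) = d*(ℓ-1) + d*(ℓ-1) := by ring
        omega
      have hnonempty : (P \ Vb).Nonempty := by
        rw [← Finset.card_pos]
        have := Finset.card_le_card_sdiff_add_card (s := P) (t := Vb)
        omega
      obtain ⟨x', hx'⟩ := hnonempty
      rw [Finset.mem_sdiff] at hx'
      obtain ⟨hx'P, hx'vb⟩ := hx'
      have hlight : ∀ j, j < k → rW ≤ ((BWi j) \ G.neighborFinset x').card := by
        intro j hj
        by_contra hcon
        push_neg at hcon
        apply hx'vb
        rw [hVbdef]
        exact Finset.mem_biUnion.mpr ⟨j, Finset.mem_range.mpr hj,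
          Finset.mem_filter.mpr ⟨hx'P, hcon⟩⟩
      exact BUILD x' hx'P hlight ∅ (Finset.empty_subset _)
        (fun p hp => absurd hp (Finset.notMem_empty p))
        (fun h => absurd h (by omega))

end Phase1

section Phase2
variable {V : Type*} [Fintype V] [DecidableEq V]

set_option maxHeartbeats 2000000 in
lemma phase2 (G : SimpleGraph V) [DecidableRel G.Adj]
    (d ℓ : ℕ) (hd : 2 ≤ d) (hℓ : 2 ≤ ℓ)
    (hK : ¬ContainsKll G ℓ) (u : V) (x : ℕ → V)
    (X1 : ∀ i, i < d → x i ∈ G.neighborFinset u)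
    (X4 : ∀ i, i < d → reqF ℓ (d-1) ≤
      ((OutS G u (x i)) \ ((Finset.range d).erase i).biUnion
        (fun j => G.neighborFinset (x j))).card) :
    ∀ jj, jj ≤ d → ∃ z : ℕ → V,
      (∀ i, i < jj → z i ∈ ((OutS G u (x i)) \ ((Finset.range d).erase i).biUnion
          (fun j => G.neighborFinset (x j))) \
          (Finset.range i).biUnion (fun i' => G.neighborFinset (z i'))) ∧
      (∀ i, jj ≤ i → i < d → reqF ℓ (d-1-jj) ≤
        (((OutS G u (x i)) \ ((Finset.range d).erase i).biUnion
          (fun j => G.neighborFinset (x j))) \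
          (Finset.range jj).biUnion (fun i' => G.neighborFinset (z i'))).card) := by
  intro jj
  induction jj with
  | zero =>
    intro _
    refine ⟨fun _ => u, fun i hi => absurd hi (by omega), ?_⟩
    intro i _ hi
    simp only [Nat.sub_zero, Finset.range_zero, Finset.biUnion_empty, Finset.sdiff_empty]
    exact X4 i hi
  | succ jj ih =>
    intro hjd
    have hjjd : jj < d := by omega
    obtain ⟨z, J1, J2⟩ := ih (by omega)
    set BW : ℕ → Finset V := fun i => (OutS G u (x i)) \ ((Finset.range d).erase i).biUnion
      (fun j => G.neighborFinset (x j)) with hBW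
    set curW : ℕ → Finset V := fun i => (BW i) \ (Finset.range jj).biUnion
      (fun i' => G.neighborFinset (z i')) with hcurW
    have hanch : ∀ i, i < d → ∀ b ∈ curW i, G.Adj (x i) b := by
      intro i hi b hb
      simp only [hcurW, hBW] at hb
      have h1 := (Finset.mem_sdiff.mp hb).1
      have h2 := (Finset.mem_sdiff.mp h1).1
      have h3 := (Finset.mem_sdiff.mp h2).1
      rwa [SimpleGraph.mem_neighborFinset] at h3
    have hCnotN : ∀ i, ∀ b ∈ curW i, b ∉ G.neighborFinset u := by
      intro i b hb
      simp only [hcurW, hBW] at hb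
      have h1 := (Finset.mem_sdiff.mp hb).1
      have h2 := (Finset.mem_sdiff.mp h1).1
      exact OutS_not_nbr_u h2
    set C := curW jj with hC
    have hCcard : reqF ℓ (d-1-jj) ≤ C.card := J2 jj le_rfl hjjd
    set I : Finset ℕ := (Finset.range d).filter (fun i => jj < i) with hI
    have hIcard : I.card = d-1-jj := by
      have : I = Finset.Ico (jj+1) d := by
        ext a
        simp only [hI, Finset.mem_filter, Finset.mem_range, Finset.mem_Ico]
        omega
      rw [this, Nat.card_Ico]
      omega
    set EX := I.biUnion (fun i => C.filter
      (fun v => ((curW i) \ G.neighborFinset v).card < reqF ℓ (d-2-jj))) with hEX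
    have hEXi : ∀ i ∈ I, (C.filter
        (fun v => ((curW i) \ G.neighborFinset v).card < reqF ℓ (d-2-jj))).card ≤ ℓ-2 := by
      intro i hiI
      rw [hI, Finset.mem_filter, Finset.mem_range] at hiI
      obtain ⟨hid, hji⟩ := hiI
      have hxiC : x i ∉ C := by
        intro hmem
        exact hCnotN jj (x i) hmem (X1 i hid)
      apply HL G ℓ hℓ hK (x i) (curW i) C (reqF ℓ (d-2-jj)) (reqF_one_le ℓ _)
        (hanch i hid) hxiC
      have hidd : d-1-jj = (d-2-jj)+1 := by omega
      have := J2 i (by omega) hid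
      rw [hidd] at this
      exact this
    have hEXcard : EX.card ≤ (d-1-jj) * (ℓ-2) := by
      calc EX.card ≤ ∑ i ∈ I, (C.filter
          (fun v => ((curW i) \ G.neighborFinset v).card < reqF ℓ (d-2-jj))).card :=
        Finset.card_biUnion_le
      _ ≤ ∑ _i ∈ I, (ℓ-2) := Finset.sum_le_sum hEXi
      _ = (d-1-jj) * (ℓ-2) := by rw [Finset.sum_const, hIcard, smul_eq_mul]
    have hnonempty : (C \ EX).Nonempty := by
      rw [← Finset.card_pos]
      have h1 : C.card ≤ (C \ EX).card + EX.card := Finset.card_le_card_sdiff_add_card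
      have h2 := reqF_lb ℓ (d-1-jj)
      omega
    obtain ⟨z', hz'⟩ := hnonempty
    rw [Finset.mem_sdiff] at hz'
    obtain ⟨hz'C, hz'EX⟩ := hz'
    set zN := Function.update z jj z' with hzN
    have hupd : ∀ i, i < jj → zN i = z i := by
      intro i hi
      rw [hzN]
      exact Function.update_of_ne (by omega) _ _
    have hupdj : zN jj = z' := by rw [hzN]; exact Function.update_self _ _ _
    have hcong : ∀ m, m ≤ jj → (Finset.range m).biUnion (fun i' => G.neighborFinset (zN i')) =
        (Finset.range m).biUnion (fun i' => G.neighborFinset (z i')) := by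
      intro m hm
      apply Finset.biUnion_congr rfl
      intro i' hi'
      rw [hupd i' (by have := Finset.mem_range.mp hi'; omega)]
    refine ⟨zN, ?_, ?_⟩
    · intro i hi
      rcases Nat.lt_or_ge i jj with h | h
      · rw [hupd i h, hcong i (by omega)]
        exact J1 i h
      · have hij : i = jj := by omega
        rw [hij, hupdj, hcong jj le_rfl]
        exact hz'C
    · intro i h1 h2
      have hji : jj < i := by omega
      rw [Finset.range_add_one, Finset.biUnion_insert, hupdj, hcong jj le_rfl]
      have hset : ((OutS G u (x i)) \ ((Finset.range d).erase i).biUnion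
          (fun j => G.neighborFinset (x j))) \
          (G.neighborFinset z' ∪ (Finset.range jj).biUnion
            (fun i' => G.neighborFinset (z i'))) = (curW i) \ G.neighborFinset z' := by
        simp only [hcurW, hBW]
        ext a
        simp only [Finset.mem_sdiff, Finset.mem_union]
        tauto
      rw [hset]
      have hz'light : ¬ (((curW i) \ G.neighborFinset z').card < reqF ℓ (d-2-jj)) := by
        intro hcon
        apply hz'EX
        rw [hEX]
        refine Finset.mem_biUnion.mpr ⟨i, ?_, Finset.mem_filter.mpr ⟨hz'C, hcon⟩⟩
        rw [hI, Finset.mem_filter, Finset.mem_range]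
        exact ⟨h2, hji⟩
      rw [show d-1-(jj+1) = d-2-jj from by omega]
      omega

end Phase2


set_option maxHeartbeats 2000000 in
theorem stmt3 {V : Type*} [Fintype V] [Nonempty V] [DecidableEq V]
    (G : SimpleGraph V) [DecidableRel G.Adj] (d ℓ : ℕ) (hd : 2 ≤ d) (hℓ : 2 ≤ ℓ)
    (hSfree : ¬ HasInducedCopy (subdividedStar d) G)
    (hK : ¬ ContainsKll G ℓ) :
    ∃ v : V, G.degree v ≤ (ℓ - 1) * (ℓ ^ (d - 1) + (d - 1) * ℓ ^ d + ℓ ^ (2 * d - 2)) := by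
  classical
  by_contra hcon
  push_neg at hcon
  obtain ⟨u, -, hmin⟩ := Finset.exists_min_image Finset.univ (fun v => G.degree v)
    ⟨Classical.arbitrary V, Finset.mem_univ _⟩
  have hmin' : ∀ v, G.degree u ≤ G.degree v := fun v => hmin v (Finset.mem_univ v)
  have hn : (ℓ-1)*(ℓ^(d-1)+(d-1)*ℓ^d+ℓ^(2*d-2)) + 1 ≤ G.degree u := by
    have := hcon u; omega
  obtain ⟨x, P, X1, X2, X3, X4, -, -, -, -⟩ := phase1 G d ℓ hd hℓ hK u hmin' hn d le_rfl
  have X4' : ∀ i, i < d → reqF ℓ (d-1) ≤ ((OutS G u (x i)) \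
      ((Finset.range d).erase i).biUnion (fun j => G.neighborFinset (x j))).card := by
    intro i hi
    have h := X4 i hi
    rwa [show 2*d-1-d = d-1 from by omega] at h
  obtain ⟨z, Z1, -⟩ := phase2 G d ℓ hd hℓ hK u x X1 X4' d le_rfl
  have hxN : ∀ i, i < d → G.Adj u (x i) := fun i hi => by
    have := X1 i hi; rwa [SimpleGraph.mem_neighborFinset] at this
  have hzfacts : ∀ i, i < d →
      G.Adj (x i) (z i) ∧ z i ≠ u ∧ ¬ G.Adj u (z i) ∧
      (∀ j, j < d → j ≠ i → ¬ G.Adj (x j) (z i)) ∧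
      (∀ i', i' < i → ¬ G.Adj (z i') (z i)) ∧
      (z i ∉ G.neighborFinset u) := by
    intro i hi
    have h1 := Z1 i hi
    rw [Finset.mem_sdiff] at h1
    obtain ⟨h2, h3⟩ := h1
    rw [Finset.mem_sdiff] at h2
    obtain ⟨hOut, hxb⟩ := h2
    have hOut' := mem_OutS.mp hOut
    refine ⟨hOut'.1, hOut'.2.1, hOut'.2.2, ?_, ?_, ?_⟩
    · intro j hj hne hadj
      apply hxb
      refine Finset.mem_biUnion.mpr ⟨j, Finset.mem_erase.mpr ⟨hne, Finset.mem_range.mpr hj⟩, ?_⟩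
      rwa [SimpleGraph.mem_neighborFinset]
    · intro i' hi' hadj
      apply h3
      refine Finset.mem_biUnion.mpr ⟨i', Finset.mem_range.mpr hi', ?_⟩
      rwa [SimpleGraph.mem_neighborFinset]
    · rw [SimpleGraph.mem_neighborFinset]; exact hOut'.2.2
  have hzx : ∀ i j, i < d → j < d → z i ≠ x j := by
    intro i j hi hj heq
    have hni := (hzfacts i hi).2.2.2.2.2
    rw [heq] at hni
    exact hni (X1 j hj)
  have hzz : ∀ i j, i < d → j < d → i ≠ j → z i ≠ z j := by
    intro i j hi hj hne heq
    have h1 : G.Adj (x i) (z i) := (hzfacts i hi).1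
    have h2 : ¬ G.Adj (x i) (z j) := (hzfacts j hj).2.2.2.1 i hi hne
    rw [heq] at h1
    exact h2 h1
  have hxu : ∀ i, i < d → x i ≠ u := by
    intro i hi heq
    have hadj := hxN i hi
    rw [heq] at hadj
    exact G.loopless.irrefl u hadj
  have hzznadj : ∀ i j, i < d → j < d → i ≠ j → ¬ G.Adj (z i) (z j) := by
    intro i j hi hj hne hadj
    rcases Nat.lt_or_ge i j with h | h
    · exact (hzfacts j hj).2.2.2.2.1 i h hadj
    · exact (hzfacts i hi).2.2.2.2.1 j (by omega) (G.adj_symm hadj)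
  set f : Option (Fin d × Bool) → V :=
    fun o => o.elim u (fun p => if p.2 then z p.1 else x p.1) with hf
  have hfnone : f none = u := rfl
  have hffalse : ∀ i : Fin d, f (some (i, false)) = x i.val := fun i => rfl
  have hftrue : ∀ i : Fin d, f (some (i, true)) = z i.val := fun i => rfl
  have hinj : Function.Injective f := by
    intro a b hab
    rcases a with _ | ⟨i, bi⟩ <;> rcases b with _ | ⟨j, bj⟩
    · rfl
    · exfalso
      cases bj
      · rw [hfnone, hffalse] at hab; exact hxu j.val j.2 hab.symm
      · rw [hfnone, hftrue] at hab; exact (hzfacts j.val j.2).2.1 hab.symm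
    · exfalso
      cases bi
      · rw [hfnone, hffalse] at hab; exact hxu i.val i.2 hab
      · rw [hfnone, hftrue] at hab; exact (hzfacts i.val i.2).2.1 hab
    · cases bi <;> cases bj
      · rw [hffalse, hffalse] at hab
        have hij : i = j := by
          by_contra hne
          exact X3 i.val j.val i.2 j.2 (fun h => hne (Fin.ext h)) hab
        rw [hij]
      · exfalso
        rw [hffalse, hftrue] at hab
        exact hzx j.val i.val j.2 i.2 hab.symm
      · exfalso
        rw [hftrue, hffalse] at hab
        exact hzx i.val j.val i.2 j.2 hab
      · rw [hftrue, hftrue] at hab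
        have hij : i = j := by
          by_contra hne
          exact hzz i.val j.val i.2 j.2 (fun h => hne (Fin.ext h)) hab
        rw [hij]
  have hiff : ∀ a b, G.Adj (f a) (f b) ↔ (subdividedStar d).Adj a b := by
    intro a b
    rcases a with _ | ⟨i, bi⟩
    · rcases b with _ | ⟨j, bj⟩
      · rw [hfnone]
        apply iff_of_false (G.loopless.irrefl u)
        simp [subdividedStar, SimpleGraph.fromRel_adj]
      · cases bj
        · rw [hfnone, hffalse]
          apply iff_of_true (hxN j.val j.2)
          rw [subdividedStar, SimpleGraph.fromRel_adj]
          exact ⟨by simp, Or.inl (Or.inl ⟨j, rfl, rfl⟩)⟩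
        · rw [hfnone, hftrue]
          apply iff_of_false ((hzfacts j.val j.2).2.2.1)
          intro hadj
          rw [subdividedStar, SimpleGraph.fromRel_adj] at hadj
          simp at hadj
    · rcases b with _ | ⟨j, bj⟩
      · cases bi
        · rw [hffalse, hfnone]
          apply iff_of_true (G.adj_symm (hxN i.val i.2))
          rw [subdividedStar, SimpleGraph.fromRel_adj]
          exact ⟨by simp, Or.inr (Or.inl ⟨i, rfl, rfl⟩)⟩
        · rw [hftrue, hfnone]
          apply iff_of_false (fun h => (hzfacts i.val i.2).2.2.1 (G.adj_symm h))
          intro hadj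
          rw [subdividedStar, SimpleGraph.fromRel_adj] at hadj
          simp at hadj
      · cases bi <;> cases bj
        · rw [hffalse, hffalse]
          apply iff_of_false
          · rcases eq_or_ne i j with rfl | hne
            · exact G.loopless.irrefl _
            · exact X2 i.val j.val i.2 j.2 (fun h => hne (Fin.ext h))
          · intro hadj
            rw [subdividedStar, SimpleGraph.fromRel_adj] at hadj
            simp at hadj
        · rw [hffalse, hftrue]
          rcases eq_or_ne i j with rfl | hne
          · apply iff_of_true ((hzfacts i.val i.2).1)
            rw [subdividedStar, SimpleGraph.fromRel_adj]
            refine ⟨by simp, Or.inl (Or.inr ⟨i, rfl, rfl⟩)⟩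
          · apply iff_of_false
              ((hzfacts j.val j.2).2.2.2.1 i.val i.2 (fun h => hne (Fin.ext h)))
            intro hadj
            rw [subdividedStar, SimpleGraph.fromRel_adj] at hadj
            simp at hadj
            first | exact hne hadj | exact hne hadj.symm
        · rw [hftrue, hffalse]
          rcases eq_or_ne i j with rfl | hne
          · apply iff_of_true (G.adj_symm ((hzfacts i.val i.2).1))
            rw [subdividedStar, SimpleGraph.fromRel_adj]
            refine ⟨by simp, Or.inr (Or.inr ⟨i, rfl, rfl⟩)⟩
          · apply iff_of_false
              (fun h => (hzfacts i.val i.2).2.2.2.1 j.val j.2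
                (fun hh => hne (Fin.ext hh).symm) (G.adj_symm h))
            intro hadj
            rw [subdividedStar, SimpleGraph.fromRel_adj] at hadj
            simp at hadj
            first | exact hne hadj | exact hne hadj.symm
        · rw [hftrue, hftrue]
          apply iff_of_false
          · rcases eq_or_ne i j with rfl | hne
            · exact G.loopless.irrefl _
            · exact hzznadj i.val j.val i.2 j.2 (fun h => hne (Fin.ext h))
          · intro hadj
            rw [subdividedStar, SimpleGraph.fromRel_adj] at hadj
            simp at hadj
  exact hSfree ⟨⟨f, hinj⟩, hiff⟩
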